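/- Let V be a finite set, b ∈ (0,1], and p, y : V → [0,1]; set x_e = p_e·y_e. Let I and J be independent random subsets of V, where each e ∈ V lies in I independently with probability b·y_e, and each e ∈ V lies in J independently with probability p_e. Let π_out, π_in : 2^V → 2^V be maps with π_out(A) ⊆ A and π_in(A) ⊆ A for all A ⊆ V, and let c_out, c_in ∈ [0,1]. Assume: (i) for every e ∈ V with b·y_e > 0, Pr[e ∈ π_out(I) | e ∈ I] ≥ c_out; (ii) if R is a random subset of V containing each e independently with probability b·x_e, then for every e with b·x_e > 0, Pr[e ∈ π_in(R) | e ∈ R] ≥ c_in; (iii) π_in is monotone: for all e ∈ A₁ ⊆ A₂ ⊆ V, if e ∈ π_in(A₂) then e ∈ π_in(A₁). Then for every e ∈ V, Pr[ e ∈ π_in( π_out(I) ∩ J ) ] ≥ b·(c_out + c_in − 1)·x_e. -/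

import Mathlib

open Finset

/-- The probability mass of the outcome `ι` in the product of independent
Bernoulli distributions where coordinate `e` equals `true` with probability `p e`. -/
noncomputable def prodWeight {V : Type*} [Fintype V] (p : V → ℝ) (ι : V → Bool) : ℝ :=
  ∏ e, (if ι e then p e else 1 - p e)

/-- The subset of `V` encoded by the Boolean outcome `ι`. -/
def outcomeSet {V : Type*} [Fintype V] (ι : V → Bool) : Finset V :=
  univ.filter (fun e => ι e = true)

section Aux
variable {V : Type*} [Fintype V] [DecidableEq V]

lemma sum_prod_fun {A : Type*} [Fintype A] (w : V → A → ℝ) :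
    ∑ σ : V → A, ∏ f, w f (σ f) = ∏ f, ∑ a, w f a := by
  classical
  rw [Finset.prod_univ_sum, Fintype.piFinset_univ]

lemma prodWeight_nonneg' (p : V → ℝ) (hp0 : ∀ f, 0 ≤ p f) (hp1 : ∀ f, p f ≤ 1) (ι : V → Bool) :
    0 ≤ prodWeight p ι := by
  refine Finset.prod_nonneg fun f _ => ?_
  by_cases h : ι f <;> simp [h]
  · exact hp0 f
  · linarith [hp1 f]

lemma indicator_funext {α β : Type*} [Fintype α] [DecidableEq β] (u v : α → β) :
    (if u = v then (1:ℝ) else 0) = ∏ f, (if u f = v f then (1:ℝ) else 0) := by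
  by_cases h : u = v
  · simp [h]
  · rw [if_neg h]
    obtain ⟨f, hf⟩ := Function.ne_iff.mp h
    exact (Finset.prod_eq_zero (mem_univ f) (by simp [hf])).symm

lemma marginal' (p : V → ℝ) (e : V) :
    ∑ ι : V → Bool, prodWeight p ι * (if ι e then (1:ℝ) else 0) = p e := by
  classical
  have h : ∀ ι : V → Bool, prodWeight p ι * (if ι e then (1:ℝ) else 0)
      = ∏ f, ((if ι f then p f else 1 - p f) * (if f = e then (if ι f then (1:ℝ) else 0) else 1)) := by
    intro ι
    rw [Finset.prod_mul_distrib]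
    unfold prodWeight
    congr 1
    rw [Finset.prod_ite_eq' univ e fun f => (if ι f then (1:ℝ) else 0)]
    simp
  calc ∑ ι : V → Bool, prodWeight p ι * (if ι e then (1:ℝ) else 0)
      = ∑ ι : V → Bool, ∏ f, ((if ι f then p f else 1 - p f) *
          (if f = e then (if ι f then (1:ℝ) else 0) else 1)) :=
        Finset.sum_congr rfl fun ι _ => h ι
    _ = ∏ f, ∑ a : Bool, ((if a then p f else 1 - p f) *
          (if f = e then (if a then (1:ℝ) else 0) else 1)) :=
        sum_prod_fun (fun f (a : Bool) => (if a then p f else 1 - p f) *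
          (if f = e then (if a then (1:ℝ) else 0) else 1))
    _ = p e := ?_
  have h2 : ∀ f, (∑ a : Bool, (if a then p f else 1 - p f) *
      (if f = e then (if a then (1:ℝ) else 0) else 1)) = if f = e then p f else 1 := by
    intro f
    rw [Fintype.sum_bool]
    by_cases hf : f = e <;> simp [hf] <;> ring
  rw [Finset.prod_congr rfl fun f _ => h2 f]
  simp [Finset.prod_ite_eq']

lemma sum_sum_prod_fun (w : V → Bool → Bool → ℝ) :
    ∑ ι : V → Bool, ∑ ω : V → Bool, ∏ f, w f (ι f) (ω f)
      = ∏ f, ∑ a : Bool, ∑ c : Bool, w f a c := by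
  classical
  have h1 : ∑ ι : V → Bool, ∑ ω : V → Bool, ∏ f, w f (ι f) (ω f)
      = ∑ pr : (V → Bool) × (V → Bool), ∏ f, w f (pr.1 f) (pr.2 f) := by
    rw [← Finset.sum_product']
    rfl
  rw [h1]
  have h2 : ∑ pr : (V → Bool) × (V → Bool), ∏ f, w f (pr.1 f) (pr.2 f)
      = ∑ σ : V → Bool × Bool, ∏ f, w f (σ f).1 (σ f).2 := by
    refine (Fintype.sum_equiv (Equiv.arrowProdEquivProdArrow V (fun _ => Bool) (fun _ => Bool))
      _ _ fun σ => rfl).symm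
  rw [h2, sum_prod_fun (fun f (a : Bool × Bool) => w f a.1 a.2)]
  refine Finset.prod_congr rfl fun f _ => ?_
  rw [Fintype.sum_prod_type]

/-- Change of variables: intersection of independent Bernoulli sets is Bernoulli. -/
lemma conv (p q : V → ℝ) (g : (V → Bool) → ℝ) :
    ∑ ι : V → Bool, ∑ ω : V → Bool,
        prodWeight p ι * prodWeight q ω * g (fun f => ι f && ω f)
      = ∑ ρ : V → Bool, prodWeight (fun f => p f * q f) ρ * g ρ := by
  classical
  have step1 : ∀ ι ω : V → Bool,
      prodWeight p ι * prodWeight q ω * g (fun f => ι f && ω f)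
      = ∑ ρ : V → Bool, prodWeight p ι * prodWeight q ω *
          (if (fun f => ι f && ω f) = ρ then (1:ℝ) else 0) * g ρ := by
    intro ι ω
    symm
    rw [Finset.sum_eq_single (fun f => ι f && ω f)]
    · simp
    · intro ρ _ hρ
      rw [if_neg (fun h => hρ h.symm)]
      ring
    · intro h; exact absurd (mem_univ _) h
  have fiber : ∀ ρ : V → Bool,
      (∑ ι : V → Bool, ∑ ω : V → Bool, prodWeight p ι * prodWeight q ω *
        (if (fun f => ι f && ω f) = ρ then (1:ℝ) else 0))
      = prodWeight (fun f => p f * q f) ρ := by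
    intro ρ
    have hterm : ∀ ι ω : V → Bool,
        prodWeight p ι * prodWeight q ω * (if (fun f => ι f && ω f) = ρ then (1:ℝ) else 0)
        = ∏ f, ((if ι f then p f else 1 - p f) * (if ω f then q f else 1 - q f) *
            (if (ι f && ω f) = ρ f then (1:ℝ) else 0)) := by
      intro ι ω
      rw [indicator_funext (fun f => ι f && ω f) ρ]
      unfold prodWeight
      rw [← Finset.prod_mul_distrib, ← Finset.prod_mul_distrib]
    calc (∑ ι : V → Bool, ∑ ω : V → Bool, prodWeight p ι * prodWeight q ω *
          (if (fun f => ι f && ω f) = ρ then (1:ℝ) else 0))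
        = ∑ ι : V → Bool, ∑ ω : V → Bool,
            ∏ f, ((if ι f then p f else 1 - p f) * (if ω f then q f else 1 - q f) *
              (if (ι f && ω f) = ρ f then (1:ℝ) else 0)) :=
          Finset.sum_congr rfl fun ι _ => Finset.sum_congr rfl fun ω _ => hterm ι ω
      _ = ∏ f, ∑ a : Bool, ∑ c : Bool,
            ((if a then p f else 1 - p f) * (if c then q f else 1 - q f) *
              (if (a && c) = ρ f then (1:ℝ) else 0)) :=
          sum_sum_prod_fun (fun f (a c : Bool) =>
            (if a then p f else 1 - p f) * (if c then q f else 1 - q f) *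
              (if (a && c) = ρ f then (1:ℝ) else 0))
      _ = prodWeight (fun f => p f * q f) ρ := by
          unfold prodWeight
          refine Finset.prod_congr rfl fun f _ => ?_
          rw [Fintype.sum_bool, Fintype.sum_bool, Fintype.sum_bool]
          cases h : ρ f <;> simp <;> ring
  calc ∑ ι : V → Bool, ∑ ω : V → Bool,
        prodWeight p ι * prodWeight q ω * g (fun f => ι f && ω f)
      = ∑ ι : V → Bool, ∑ ω : V → Bool, ∑ ρ : V → Bool,
          prodWeight p ι * prodWeight q ω *
            (if (fun f => ι f && ω f) = ρ then (1:ℝ) else 0) * g ρ :=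
        Finset.sum_congr rfl fun ι _ => Finset.sum_congr rfl fun ω _ => step1 ι ω
    _ = ∑ ρ : V → Bool, ∑ ι : V → Bool, ∑ ω : V → Bool,
          prodWeight p ι * prodWeight q ω *
            (if (fun f => ι f && ω f) = ρ then (1:ℝ) else 0) * g ρ := by
        rw [Finset.sum_congr rfl fun ι (_ : ι ∈ univ) => Finset.sum_comm,
          Finset.sum_comm]
    _ = ∑ ρ : V → Bool, prodWeight (fun f => p f * q f) ρ * g ρ := by
        refine Finset.sum_congr rfl fun ρ _ => ?_
        rw [← fiber ρ, Finset.sum_mul]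
        exact Finset.sum_congr rfl fun ι _ => by rw [Finset.sum_mul]

end Aux

/-- Key CR-scheme lemma: if `π_out` is a `(b, c_out)` CR-scheme for `y` and `π_in` is a
monotone `(b, c_in)` CR-scheme for `x = p·y`, then each element `e` survives both rounds
with probability at least `b·(c_out + c_in − 1)·x e`. Here `I` has marginals `b·y` and
the active set `J` has marginals `p`, independently. -/
theorem crScheme_key_lemma {V : Type*} [Fintype V] [DecidableEq V]
    (b : ℝ) (hb0 : 0 < b) (hb1 : b ≤ 1)
    (p y : V → ℝ) (hp0 : ∀ e, 0 ≤ p e) (hp1 : ∀ e, p e ≤ 1)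
    (hy0 : ∀ e, 0 ≤ y e) (hy1 : ∀ e, y e ≤ 1)
    (x : V → ℝ) (hx : ∀ e, x e = p e * y e)
    (πout πin : Finset V → Finset V)
    (hπout : ∀ A, πout A ⊆ A) (hπin : ∀ A, πin A ⊆ A)
    (cout cin : ℝ) (hcout0 : 0 ≤ cout) (hcout1 : cout ≤ 1)
    (hcin0 : 0 ≤ cin) (hcin1 : cin ≤ 1)
    -- (i) π_out is a (b, c_out) CR-scheme for y
    (hCRout : ∀ e : V, 0 < b * y e →
      (∑ ι : V → Bool, prodWeight (fun f => b * y f) ι *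
        (if e ∈ πout (outcomeSet ι) then (1 : ℝ) else 0))
      ≥ cout * (b * y e))
    -- (ii) π_in is a (b, c_in) CR-scheme for x
    (hCRin : ∀ e : V, 0 < b * x e →
      (∑ ρ : V → Bool, prodWeight (fun f => b * x f) ρ *
        (if e ∈ πin (outcomeSet ρ) then (1 : ℝ) else 0))
      ≥ cin * (b * x e))
    -- (iii) π_in is monotone
    (hmono : ∀ (A₁ A₂ : Finset V) (e : V), e ∈ A₁ → A₁ ⊆ A₂ → e ∈ πin A₂ → e ∈ πin A₁)
    (e : V) :
    (∑ ι : V → Bool, ∑ ω : V → Bool,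
        prodWeight (fun f => b * y f) ι * prodWeight p ω *
          (if e ∈ πin (πout (outcomeSet ι) ∩ outcomeSet ω) then (1 : ℝ) else 0))
      ≥ b * (cout + cin - 1) * x e := by

  classical
  have hby0 : ∀ f, 0 ≤ b * y f := fun f => mul_nonneg hb0.le (hy0 f)
  have hby1 : ∀ f, b * y f ≤ 1 := fun f => by nlinarith [hy0 f, hy1 f]
  have hYnn : ∀ ι, 0 ≤ prodWeight (fun f => b * y f) ι :=
    prodWeight_nonneg' _ hby0 hby1
  have hPnn : ∀ ω, 0 ≤ prodWeight p ω := prodWeight_nonneg' _ hp0 hp1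
  have hxe0 : 0 ≤ x e := by rw [hx]; exact mul_nonneg (hp0 e) (hy0 e)
  by_cases hcase : b * (cout + cin - 1) * x e ≤ 0
  · refine le_trans hcase (Finset.sum_nonneg fun ι _ => Finset.sum_nonneg fun ω _ => ?_)
    refine mul_nonneg (mul_nonneg (hYnn ι) (hPnn ω)) ?_
    split <;> norm_num
  · push_neg at hcase
    have hxepos : 0 < x e := by
      rcases lt_or_eq_of_le hxe0 with h | h
      · exact h
      · exfalso; rw [← h] at hcase; simp at hcase
    have hc1 : 0 < cout + cin - 1 := by
      by_contra h
      push_neg at h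
      have h2 : (cout + cin - 1) * (b * x e) ≤ 0 :=
        mul_nonpos_of_nonpos_of_nonneg h (mul_nonneg hb0.le hxe0)
      nlinarith
    have hpe : 0 < p e := by nlinarith [hx e, hy0 e, hy1 e]
    have hye : 0 < y e := by nlinarith [hx e, hp0 e, hp1 e]
    have hbye : 0 < b * y e := mul_pos hb0 hye
    have hbxe : 0 < b * x e := mul_pos hb0 hxepos
    have hint : ∀ ι ω : V → Bool,
        outcomeSet ι ∩ outcomeSet ω = outcomeSet (fun f => ι f && ω f) := by
      intro ι ω; ext v; simp [outcomeSet]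
    -- pointwise inequality
    have key : ∀ ι ω : V → Bool,
        (if e ∈ πin (outcomeSet ι ∩ outcomeSet ω) then (1:ℝ) else 0)
        + (if e ∈ πout (outcomeSet ι) then (1:ℝ) else 0) * (if ω e then (1:ℝ) else 0)
        - (if ι e then (1:ℝ) else 0) * (if ω e then (1:ℝ) else 0)
        ≤ (if e ∈ πin (πout (outcomeSet ι) ∩ outcomeSet ω) then (1:ℝ) else 0) := by
      intro ι ω
      by_cases htot : e ∈ πin (πout (outcomeSet ι) ∩ outcomeSet ω)
      · have h1 : (if e ∈ πin (outcomeSet ι ∩ outcomeSet ω) then (1:ℝ) else 0) ≤ 1 := by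
          split <;> norm_num
        have h2 : (if e ∈ πout (outcomeSet ι) then (1:ℝ) else 0) * (if ω e then (1:ℝ) else 0)
            ≤ (if ι e then (1:ℝ) else 0) * (if ω e then (1:ℝ) else 0) := by
          by_cases hB : e ∈ πout (outcomeSet ι)
          · have hιe : ι e = true := by simpa [outcomeSet] using hπout _ hB
            simp [hB, hιe]
          · simp only [if_neg hB, zero_mul]
            split <;> split <;> norm_num
        rw [if_pos htot]
        linarith
      · rw [if_neg htot]
        by_cases hA : e ∈ πin (outcomeSet ι ∩ outcomeSet ω)
        · have hIJ := Finset.mem_inter.mp (hπin _ hA)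
          have hιe : ι e = true := by simpa [outcomeSet] using hIJ.1
          have hωe : ω e = true := by simpa [outcomeSet] using hIJ.2
          have hB : e ∉ πout (outcomeSet ι) := fun hB =>
            htot (hmono _ _ e (Finset.mem_inter.mpr ⟨hB, hIJ.2⟩)
              (Finset.inter_subset_inter (hπout _) Finset.Subset.rfl) hA)
          simp [hA, hB, hιe, hωe]
        · by_cases hB : e ∈ πout (outcomeSet ι)
          · have hιe : ι e = true := by simpa [outcomeSet] using hπout _ hB
            by_cases hωe : ω e = true <;> simp [hA, hB, hιe, hωe]
          · simp only [if_neg hA, if_neg hB, zero_mul, zero_add, zero_sub,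
              neg_nonpos]
            positivity
    -- weighted sum of key
    have hstep : (∑ ι : V → Bool, ∑ ω : V → Bool,
          prodWeight (fun f => b * y f) ι * prodWeight p ω *
            ((if e ∈ πin (outcomeSet ι ∩ outcomeSet ω) then (1:ℝ) else 0)
            + (if e ∈ πout (outcomeSet ι) then (1:ℝ) else 0) * (if ω e then (1:ℝ) else 0)
            - (if ι e then (1:ℝ) else 0) * (if ω e then (1:ℝ) else 0)))
        ≤ ∑ ι : V → Bool, ∑ ω : V → Bool,
            prodWeight (fun f => b * y f) ι * prodWeight p ω *
              (if e ∈ πin (πout (outcomeSet ι) ∩ outcomeSet ω) then (1:ℝ) else 0) := by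
      refine Finset.sum_le_sum fun ι _ => Finset.sum_le_sum fun ω _ => ?_
      exact mul_le_mul_of_nonneg_left (key ι ω) (mul_nonneg (hYnn ι) (hPnn ω))
    -- expand the left side into three sums
    have hexpand : (∑ ι : V → Bool, ∑ ω : V → Bool,
          prodWeight (fun f => b * y f) ι * prodWeight p ω *
            ((if e ∈ πin (outcomeSet ι ∩ outcomeSet ω) then (1:ℝ) else 0)
            + (if e ∈ πout (outcomeSet ι) then (1:ℝ) else 0) * (if ω e then (1:ℝ) else 0)
            - (if ι e then (1:ℝ) else 0) * (if ω e then (1:ℝ) else 0)))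
        = (∑ ι : V → Bool, ∑ ω : V → Bool,
            prodWeight (fun f => b * y f) ι * prodWeight p ω *
              (if e ∈ πin (outcomeSet ι ∩ outcomeSet ω) then (1:ℝ) else 0))
          + (∑ ι : V → Bool, ∑ ω : V → Bool,
              (prodWeight (fun f => b * y f) ι * (if e ∈ πout (outcomeSet ι) then (1:ℝ) else 0))
                * (prodWeight p ω * (if ω e then (1:ℝ) else 0)))
          - (∑ ι : V → Bool, ∑ ω : V → Bool,
              (prodWeight (fun f => b * y f) ι * (if ι e then (1:ℝ) else 0))
                * (prodWeight p ω * (if ω e then (1:ℝ) else 0))) := by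
      rw [← Finset.sum_add_distrib, ← Finset.sum_sub_distrib]
      refine Finset.sum_congr rfl fun ι _ => ?_
      rw [← Finset.sum_add_distrib, ← Finset.sum_sub_distrib]
      refine Finset.sum_congr rfl fun ω _ => ?_
      ring
    -- term A
    have hTA : (∑ ι : V → Bool, ∑ ω : V → Bool,
          prodWeight (fun f => b * y f) ι * prodWeight p ω *
            (if e ∈ πin (outcomeSet ι ∩ outcomeSet ω) then (1:ℝ) else 0))
        ≥ cin * (b * x e) := by
      have h1 : (∑ ι : V → Bool, ∑ ω : V → Bool,
            prodWeight (fun f => b * y f) ι * prodWeight p ω *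
              (if e ∈ πin (outcomeSet ι ∩ outcomeSet ω) then (1:ℝ) else 0))
          = ∑ ρ : V → Bool, prodWeight (fun f => (b * y f) * p f) ρ *
              (if e ∈ πin (outcomeSet ρ) then (1:ℝ) else 0) := by
        rw [← conv (fun f => b * y f) p (fun ρ => if e ∈ πin (outcomeSet ρ) then (1:ℝ) else 0)]
        refine Finset.sum_congr rfl fun ι _ => Finset.sum_congr rfl fun ω _ => ?_
        rw [hint ι ω]
      rw [h1]
      have h2 : (fun f => (b * y f) * p f) = fun f => b * x f := by
        funext f; rw [hx f]; ring
      rw [h2]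
      exact hCRin e hbxe
    -- term B
    have hTB : (∑ ι : V → Bool, ∑ ω : V → Bool,
          (prodWeight (fun f => b * y f) ι * (if e ∈ πout (outcomeSet ι) then (1:ℝ) else 0))
            * (prodWeight p ω * (if ω e then (1:ℝ) else 0)))
        ≥ cout * (b * y e) * p e := by
      have m2 := marginal' (V := V) p e
      rw [← Finset.sum_mul_sum, m2]
      exact mul_le_mul_of_nonneg_right (hCRout e hbye) (hp0 e)
    -- term C
    have hTC : (∑ ι : V → Bool, ∑ ω : V → Bool,
          (prodWeight (fun f => b * y f) ι * (if ι e then (1:ℝ) else 0))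
            * (prodWeight p ω * (if ω e then (1:ℝ) else 0)))
        = (b * y e) * p e := by
      have m1 := marginal' (V := V) (fun f => b * y f) e
      have m2 := marginal' (V := V) p e
      rw [← Finset.sum_mul_sum, m1, m2]
    have heq : b * (cout + cin - 1) * x e
        = cin * (b * x e) + cout * (b * y e) * p e - (b * y e) * p e := by
      rw [hx]; ring
    rw [hexpand] at hstep
    rw [ge_iff_le, heq]
    linarith [hTA, hTB, hTC.le, hTC.ge, hstep]
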